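/- Let 𝔤 be a quadratic Lie algebra with generalized metric 𝔤 = V₊ ⊕ V₋. Let D be a torsion-free V₊-compatible generalized connection and D' a V₊-compatible generalized connection whose torsion is of pure type (T_{D'}(a,b,c) = 0 whenever a, b, c are not all in V₊ nor all in V₋) and whose divergence equals that of D, div_{D'} = div_D. Then χ = D' − D satisfies: ⟨χ_a b, c⟩ = 0 whenever a, b, c are not all in V₊ nor all in V₋, and its contraction vanishes, Σ_i χ_{e_i} ẽ_i = 0 for a (hence any) basis {e_i} of 𝔤 with ⟨·,·⟩-dual basis {ẽ_i}. -/

import Mathlib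

/-- On a quadratic Lie algebra with generalized metric `𝔤 = Vp ⊕ Vm`, if
`D` is torsion-free `Vp`-compatible and `D'` is `Vp`-compatible with pure-type torsion
and the same divergence, then `χ = D' − D` satisfies `⟨χ_a b, c⟩ = 0` whenever `a,b,c`
are not all in `Vp` nor all in `Vm`, and its contraction vanishes:
`Σ_i χ_{e_i} ẽ_i = 0` for any basis `{e_i}` with `⟨·,·⟩`-dual basis `{ẽ_i}`. -/
theorem statement_15
    {𝔤 : Type*} [LieRing 𝔤] [LieAlgebra ℝ 𝔤] [FiniteDimensional ℝ 𝔤]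
    (B : 𝔤 →ₗ[ℝ] 𝔤 →ₗ[ℝ] ℝ)
    (hB_symm : ∀ x y, B x y = B y x)
    (hB_nondeg : ∀ x, (∀ y, B x y = 0) → x = 0)
    (hB_inv : ∀ x y z, B ⁅x, y⁆ z = B x ⁅y, z⁆)
    (Vp Vm : Submodule ℝ 𝔤)
    (hcompl : IsCompl Vp Vm)
    (horth : ∀ x ∈ Vp, ∀ y ∈ Vm, B x y = 0)
    (hndp : ∀ x ∈ Vp, (∀ y ∈ Vp, B x y = 0) → x = 0)
    (D D' : 𝔤 →ₗ[ℝ] 𝔤 →ₗ[ℝ] 𝔤)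
    (hD_skew : ∀ e a b, B (D e a) b + B a (D e b) = 0)
    (hD'_skew : ∀ e a b, B (D' e a) b + B a (D' e b) = 0)
    (hD_compp : ∀ e, ∀ x ∈ Vp, D e x ∈ Vp) (hD_compm : ∀ e, ∀ x ∈ Vm, D e x ∈ Vm)
    (hD'_compp : ∀ e, ∀ x ∈ Vp, D' e x ∈ Vp) (hD'_compm : ∀ e, ∀ x ∈ Vm, D' e x ∈ Vm)
    (hD_tf : ∀ e₁ e₂ e₃, B (D e₁ e₂ - D e₂ e₁ - ⁅e₁, e₂⁆) e₃ + B (D e₃ e₁) e₂ = 0)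
    (hT'_pure : ∀ a b c : 𝔤,
      (a ∈ Vp ∨ a ∈ Vm) → (b ∈ Vp ∨ b ∈ Vm) → (c ∈ Vp ∨ c ∈ Vm) →
      ¬(a ∈ Vp ∧ b ∈ Vp ∧ c ∈ Vp) → ¬(a ∈ Vm ∧ b ∈ Vm ∧ c ∈ Vm) →
      B (D' a b - D' b a - ⁅a, b⁆) c + B (D' c a) b = 0)
    (hdiv : ∀ e, LinearMap.trace ℝ 𝔤 (D'.flip e) = LinearMap.trace ℝ 𝔤 (D.flip e))
    {ι : Type*} [Fintype ι] [DecidableEq ι]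
    (bb : Module.Basis ι ℝ 𝔤) (d : ι → 𝔤)
    (hd : ∀ i j, B (bb i) (d j) = if i = j then 1 else 0) :
    (∀ a b c : 𝔤,
      (a ∈ Vp ∨ a ∈ Vm) → (b ∈ Vp ∨ b ∈ Vm) → (c ∈ Vp ∨ c ∈ Vm) →
      ¬(a ∈ Vp ∧ b ∈ Vp ∧ c ∈ Vp) → ¬(a ∈ Vm ∧ b ∈ Vm ∧ c ∈ Vm) →
      B ((D' - D) a b) c = 0) ∧
    (∑ i, (D' - D) (bb i) (d i) = 0) := by

  have hχ_apply : ∀ e a : 𝔤, (D' - D) e a = D' e a - D e a := by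
    intro e a; simp [LinearMap.sub_apply]
  have hχ_skew : ∀ e a b : 𝔤, B ((D' - D) e a) b = - B a ((D' - D) e b) := by
    intro e a b
    have h1 := hD_skew e a b
    have h2 := hD'_skew e a b
    simp only [hχ_apply, map_sub, LinearMap.sub_apply] at *
    linarith
  have hχ_compp : ∀ e, ∀ x ∈ Vp, (D' - D) e x ∈ Vp := by
    intro e x hx; rw [hχ_apply]; exact Submodule.sub_mem _ (hD'_compp e x hx) (hD_compp e x hx)
  have hχ_compm : ∀ e, ∀ x ∈ Vm, (D' - D) e x ∈ Vm := by
    intro e x hx; rw [hχ_apply]; exact Submodule.sub_mem _ (hD'_compm e x hx) (hD_compm e x hx)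
  have key : ∀ a b c : 𝔤, B ((D' - D) a b) c - B ((D' - D) b a) c + B ((D' - D) c a) b =
      (B (D' a b - D' b a - ⁅a, b⁆) c + B (D' c a) b)
      - (B (D a b - D b a - ⁅a, b⁆) c + B (D c a) b) := by
    intro a b c
    simp only [hχ_apply, map_sub, LinearMap.sub_apply]
    ring
  constructor
  · intro a b c ha hb hc hnp hnm
    rcases hb with hb | hb
    · rcases hc with hc | hc
      · -- b, c ∈ Vp, hence a ∈ Vm
        rcases ha with ha | ha
        · exact absurd ⟨ha, hb, hc⟩ hnp
        · have h1 := hT'_pure a b c (Or.inr ha) (Or.inl hb) (Or.inl hc) hnp hnm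
          have h2 := hD_tf a b c
          have e1 : B ((D' - D) b a) c = 0 := by
            rw [hB_symm]; exact horth c hc _ (hχ_compm b a ha)
          have e2 : B ((D' - D) c a) b = 0 := by
            rw [hB_symm]; exact horth b hb _ (hχ_compm c a ha)
          have := key a b c
          linarith
      · exact horth _ (hχ_compp a b hb) _ hc
    · rcases hc with hc | hc
      · rw [hB_symm]; exact horth c hc _ (hχ_compm a b hb)
      · -- b, c ∈ Vm, hence a ∈ Vp
        rcases ha with ha | ha
        · have h1 := hT'_pure a b c (Or.inl ha) (Or.inr hb) (Or.inr hc) hnp hnm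
          have h2 := hD_tf a b c
          have e1 : B ((D' - D) b a) c = 0 := horth _ (hχ_compp b a ha) _ hc
          have e2 : B ((D' - D) c a) b = 0 := horth _ (hχ_compp c a ha) _ hb
          have := key a b c
          linarith
        · exact absurd ⟨ha, hb, hc⟩ hnm
  · -- contraction vanishes
    have hrepr : ∀ (x : 𝔤) (i : ι), B x (d i) = bb.repr x i := by
      intro x i
      conv_lhs => rw [← bb.sum_repr x]
      simp only [map_sum, map_smul, LinearMap.sum_apply, LinearMap.smul_apply, hd, smul_eq_mul, mul_ite, mul_one, mul_zero, Finset.sum_ite_eq', Finset.mem_univ, if_true]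
    have htrace : ∀ f : 𝔤 →ₗ[ℝ] 𝔤, LinearMap.trace ℝ 𝔤 f = ∑ i, bb.repr (f (bb i)) i := by
      intro f
      rw [LinearMap.trace_eq_matrix_trace ℝ bb f]
      simp [Matrix.trace, Matrix.diag, LinearMap.toMatrix_apply]
    have hdiv0 : ∀ e : 𝔤, ∑ i, B ((D' - D) (bb i) e) (d i) = 0 := by
      intro e
      have hz : LinearMap.trace ℝ 𝔤 ((D' - D).flip e) = 0 := by
        have hfl : (D' - D).flip e = D'.flip e - D.flip e := by
          ext x; simp [LinearMap.flip_apply, LinearMap.sub_apply]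
        rw [hfl, map_sub, hdiv e, sub_self]
      calc ∑ i, B ((D' - D) (bb i) e) (d i) = ∑ i, bb.repr ((D' - D).flip e (bb i)) i := by
            simp [hrepr, LinearMap.flip_apply]
        _ = LinearMap.trace ℝ 𝔤 ((D' - D).flip e) := (htrace _).symm
        _ = 0 := hz
    have hBz : ∀ e : 𝔤, B e (∑ i, (D' - D) (bb i) (d i)) = 0 := by
      intro e
      rw [map_sum]
      have : ∀ i : ι, B e ((D' - D) (bb i) (d i)) = - B ((D' - D) (bb i) e) (d i) := by
        intro i
        have := hχ_skew (bb i) e (d i)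
        linarith
      rw [Finset.sum_congr rfl (fun i _ => this i), Finset.sum_neg_distrib, hdiv0 e, neg_zero]
    exact hB_nondeg _ (fun y => by rw [hB_symm]; exact hBz y)
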